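/- Let ξ : E with F'(ξ) ≠ 0. Then Condition Bryuno holds at ξ if and only if the linear map from E × ℝ to E →L[ℝ] ℝ sending (X, α) to F''(ξ) X + α • F'(ξ) is surjective. -/
import Mathlib

open Module

theorem bryuno_key {E W : Type*} [AddCommGroup E] [Module ℝ E] [AddCommGroup W] [Module ℝ W]
    [FiniteDimensional ℝ E] [FiniteDimensional ℝ W]
    (hdim : finrank ℝ W = finrank ℝ E)
    (A : E →ₗ[ℝ] W) (v : W) (hv : v ≠ 0) :
    (∀ X Y : E, A X ∈ Submodule.span ℝ {v} → A Y ∈ Submodule.span ℝ {v} →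
        ¬ LinearIndependent ℝ ![X, Y]) ↔
    Function.Surjective (fun p : E × ℝ => A p.1 + p.2 • v) := by
  classical
  set S : Submodule ℝ E := Submodule.comap A (Submodule.span ℝ {v}) with hS
  set U : (E × ℝ) →ₗ[ℝ] W :=
    A.comp (LinearMap.fst ℝ E ℝ) + (LinearMap.snd ℝ E ℝ).smulRight v with hU
  have hUapp : ∀ p : E × ℝ, U p = A p.1 + p.2 • v := fun p => rfl
  -- Step 2 : 1 ≤ finrank S
  have hS1 : 1 ≤ finrank ℝ S := by
    have hq := (Submodule.span ℝ {v}).finrank_quotient_add_finrank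
    rw [finrank_span_singleton hv] at hq
    have hker : LinearMap.ker ((Submodule.span ℝ {v}).mkQ.comp A) = S := by
      rw [LinearMap.ker_comp, Submodule.ker_mkQ]
    have hrn := LinearMap.finrank_range_add_finrank_ker ((Submodule.span ℝ {v}).mkQ.comp A)
    rw [hker] at hrn
    have hle : finrank ℝ (LinearMap.range ((Submodule.span ℝ {v}).mkQ.comp A))
        ≤ finrank ℝ (W ⧸ Submodule.span ℝ {v}) := Submodule.finrank_le _
    omega
  -- Step 3 : finrank (ker U) = finrank S
  have hkerS : finrank ℝ (LinearMap.ker U) = finrank ℝ S := by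
    have hmem : ∀ p : LinearMap.ker U, ((LinearMap.fst ℝ E ℝ).comp (LinearMap.ker U).subtype) p ∈ S := by
      rintro ⟨⟨X, α⟩, hp⟩
      have hp' : A X + α • v = 0 := hp
      have : A X = (-α) • v := by
        rw [neg_smul]
        linear_combination (norm := module) hp'
      simp only [hS, Submodule.mem_comap, LinearMap.comp_apply, Submodule.subtype_apply, LinearMap.fst_apply]
      rw [this]
      exact Submodule.smul_mem _ _ (Submodule.mem_span_singleton_self v)
    set φ : (LinearMap.ker U) →ₗ[ℝ] S :=
      LinearMap.codRestrict S ((LinearMap.fst ℝ E ℝ).comp (LinearMap.ker U).subtype) hmem with hφ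
    have hinj : Function.Injective φ := by
      rintro ⟨⟨X, α⟩, hp⟩ ⟨⟨Y, β⟩, hq⟩ h
      have hXY : X = Y := congrArg Subtype.val h
      subst hXY
      have hp' : A X + α • v = 0 := hp
      have hq' : A X + β • v = 0 := hq
      have : (α - β) • v = 0 := by
        rw [sub_smul]
        linear_combination (norm := module) hp' - hq'
      rcases smul_eq_zero.mp this with h' | h'
      · have : α = β := by linarith [sub_eq_zero.mp (by linarith : α - β = 0)]
        simp [this]
      · exact absurd h' hv
    have hsurj : Function.Surjective φ := by
      rintro ⟨X, hX⟩
      rcases Submodule.mem_span_singleton.mp hX with ⟨c, hc⟩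
      refine ⟨⟨(X, -c), ?_⟩, rfl⟩
      show A X + (-c) • v = 0
      rw [neg_smul, ← hc]
      abel
    exact (LinearEquiv.ofBijective φ ⟨hinj, hsurj⟩).finrank_eq
  -- Step 4 : surjectivity iff finrank S = 1
  have hsurj_iff : Function.Surjective (fun p : E × ℝ => A p.1 + p.2 • v) ↔ finrank ℝ S = 1 := by
    have hrn := LinearMap.finrank_range_add_finrank_ker U
    rw [hkerS] at hrn
    have hEprod : finrank ℝ (E × ℝ) = finrank ℝ E + 1 := by
      simp [finrank_prod]
    rw [hEprod] at hrn
    constructor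
    · intro h
      have : LinearMap.range U = ⊤ := LinearMap.range_eq_top.mpr h
      rw [this, finrank_top, hdim] at hrn
      omega
    · intro h
      rw [h] at hrn
      have : finrank ℝ (LinearMap.range U) = finrank ℝ W := by omega
      have htop : LinearMap.range U = ⊤ :=
        Submodule.eq_top_of_finrank_eq this
      exact LinearMap.range_eq_top.mp htop
  rw [hsurj_iff]
  -- Step 1 : Bryuno iff finrank S ≤ 1
  constructor
  · intro h
    by_contra h2
    have h2' : 2 ≤ finrank ℝ S := by omega
    obtain ⟨f, hf⟩ := exists_linearIndependent_of_le_finrank h2'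
    have hXY : LinearIndependent ℝ ![((f 0 : S) : E), ((f 1 : S) : E)] := by
      have := hf.map' S.subtype S.ker_subtype
      have heq : ![((f 0 : S) : E), ((f 1 : S) : E)] = S.subtype ∘ f := by
        funext i
        fin_cases i <;> rfl
      rw [heq]
      exact this
    exact h _ _ (f 0).2 (f 1).2 hXY
  · intro h X Y hX hY hli
    have hsub : Set.range ![X, Y] ⊆ (S : Set E) := by
      rw [Set.range_subset_iff]
      intro i
      fin_cases i
      · exact hX
      · exact hY
    have hspan : Submodule.span ℝ (Set.range ![X, Y]) ≤ S := Submodule.span_le.mpr hsub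
    have hcard := finrank_span_eq_card hli
    have h2 : 2 ≤ finrank ℝ S := by
      have := Submodule.finrank_mono hspan
      simp [hcard] at this ⊢
      omega
    omega

/-- For `ξ` with `F'(ξ) ≠ 0`, Condition Bryuno holds at `ξ` iff the linear map
`(X, α) ↦ F''(ξ) X + α • F'(ξ)` from `E × ℝ` to `E →L[ℝ] ℝ` is surjective. -/
theorem bryuno_iff_U_surjective (d : ℕ) (hd : 1 ≤ d)
    (F : EuclideanSpace ℝ (Fin d) → ℝ) (hF : ContDiff ℝ 2 F)
    (ξ : EuclideanSpace ℝ (Fin d)) (hξ : fderiv ℝ F ξ ≠ 0) :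
    (∀ X Y : EuclideanSpace ℝ (Fin d),
        fderiv ℝ (fun η => fderiv ℝ F η) ξ X ∈ Submodule.span ℝ {fderiv ℝ F ξ} →
        fderiv ℝ (fun η => fderiv ℝ F η) ξ Y ∈ Submodule.span ℝ {fderiv ℝ F ξ} →
        ¬ LinearIndependent ℝ ![X, Y]) ↔
    Function.Surjective (fun p : EuclideanSpace ℝ (Fin d) × ℝ =>
        fderiv ℝ (fun η => fderiv ℝ F η) ξ p.1 + p.2 • fderiv ℝ F ξ) := by
  have hdim : finrank ℝ (EuclideanSpace ℝ (Fin d) →L[ℝ] ℝ)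
      = finrank ℝ (EuclideanSpace ℝ (Fin d)) := by
    rw [← (LinearMap.toContinuousLinearMap (𝕜 := ℝ) (E := EuclideanSpace ℝ (Fin d))
      (F' := ℝ)).finrank_eq]
    exact Module.finrank_linearMap_self ℝ ℝ _
  exact bryuno_key hdim (fderiv ℝ (fun η => fderiv ℝ F η) ξ).toLinearMap (fderiv ℝ F ξ) hξ
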